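/- Let Λ ⊂ ℝⁿ be a countable discrete set and let C be an invertible n×n real matrix. Then |det C| · D⁺(CΛ) = D⁺(Λ), where CΛ = {Cλ : λ ∈ Λ}. -/

import Mathlib

open MeasureTheory Filter
open scoped ENNReal

/-- The upper Beurling density of a positive Borel measure on ℝⁿ. -/
noncomputable def beurlingUpper {n : ℕ} (ν : Measure (EuclideanSpace ℝ (Fin n))) : ℝ≥0∞ :=
  Filter.limsup (fun N : ℝ =>
    ⨆ z : EuclideanSpace ℝ (Fin n),
      ν {y | ∀ i, |y i - z i| ≤ N / 2} / ENNReal.ofReal (N ^ n)) Filter.atTop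

/-- The counting measure `Σ_{λ ∈ Λ} δ_λ` of a subset `Λ ⊆ ℝⁿ`. -/
noncomputable def countingMeasure {n : ℕ} (Λ : Set (EuclideanSpace ℝ (Fin n))) :
    Measure (EuclideanSpace ℝ (Fin n)) :=
  Measure.sum (fun x : Λ => Measure.dirac (x : EuclideanSpace ℝ (Fin n)))

namespace BeurlingDensityAux

open Set

variable {n : ℕ}

local notation "E'" => EuclideanSpace ℝ (Fin n)

/-- The closed cube of side `s` centred at `z`. -/
def qcube (z : E') (s : ℝ) : Set E' := {y | ∀ i, |y i - z i| ≤ s / 2}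

lemma qcube_eq (z : E') (s : ℝ) :
    qcube z s = (MeasurableEquiv.toLp 2 (Fin n → ℝ)).symm ⁻¹'
      (Set.univ.pi fun i => Icc (z i - s / 2) (z i + s / 2)) := by
  ext y
  simp only [qcube, mem_setOf_eq, mem_preimage, Set.mem_pi, mem_univ, forall_true_left, mem_Icc,
    MeasurableEquiv.toLp_symm_apply, MeasurableEquiv.coe_mk, abs_le]
  constructor <;> intro h i <;> obtain ⟨h1, h2⟩ := h i <;> constructor <;> linarith

lemma measurableSet_qcube (z : E') (s : ℝ) : MeasurableSet (qcube z s) := by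
  rw [qcube_eq]
  exact (MeasurableEquiv.toLp 2 (Fin n → ℝ)).symm.measurable
    (MeasurableSet.univ_pi fun i => measurableSet_Icc)

lemma volume_qcube (z : E') {s : ℝ} (hs : 0 ≤ s) :
    volume (qcube z s) = ENNReal.ofReal (s ^ n) := by
  rw [qcube_eq, (EuclideanSpace.volume_preserving_symm_measurableEquiv_toLp (Fin n)).measure_preimage
    (MeasurableSet.univ_pi fun i => measurableSet_Icc).nullMeasurableSet, volume_pi_pi]
  have h : ∀ i : Fin n, volume (Icc (z i - s / 2) (z i + s / 2)) = ENNReal.ofReal s := by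
    intro i; rw [Real.volume_Icc]; ring_nf
  simp [h, ENNReal.ofReal_pow hs]

lemma box_eq (a : Fin n → ℝ) (R : ℝ) :
    {x : EuclideanSpace ℝ (Fin n) | ∀ i, a i ≤ x i ∧ x i < a i + R} =
      (MeasurableEquiv.toLp 2 (Fin n → ℝ)).symm ⁻¹'
      (Set.univ.pi fun i => Ico (a i) (a i + R)) := by
  ext y
  simp only [mem_setOf_eq, mem_preimage, Set.mem_pi, mem_univ, forall_true_left, mem_Ico,
    MeasurableEquiv.toLp_symm_apply, MeasurableEquiv.coe_mk]

lemma measurableSet_box (a : Fin n → ℝ) (R : ℝ) :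
    MeasurableSet {x : EuclideanSpace ℝ (Fin n) | ∀ i, a i ≤ x i ∧ x i < a i + R} := by
  rw [box_eq]
  exact (MeasurableEquiv.toLp 2 (Fin n → ℝ)).symm.measurable
    (MeasurableSet.univ_pi fun i => measurableSet_Ico)

lemma volume_box (a : Fin n → ℝ) {R : ℝ} (hR : 0 ≤ R) :
    volume {x : EuclideanSpace ℝ (Fin n) | ∀ i, a i ≤ x i ∧ x i < a i + R} =
      ENNReal.ofReal (R ^ n) := by
  rw [box_eq, (EuclideanSpace.volume_preserving_symm_measurableEquiv_toLp (Fin n)).measure_preimage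
    (MeasurableSet.univ_pi fun i => measurableSet_Ico).nullMeasurableSet, volume_pi_pi]
  simp [Real.volume_Ico, ENNReal.ofReal_pow hR]

lemma coord_le_norm (x : EuclideanSpace ℝ (Fin n)) (i : Fin n) : |x i| ≤ ‖x‖ := by
  rw [EuclideanSpace.norm_eq, ← Real.sqrt_sq_eq_abs]
  refine Real.sqrt_le_sqrt ?_
  calc x i ^ 2 = ‖x i‖ ^ 2 := by rw [Real.norm_eq_abs, sq_abs]
    _ ≤ ∑ j, ‖x j‖ ^ 2 :=
        Finset.single_le_sum (fun j _ => sq_nonneg ‖x j‖) (Finset.mem_univ i)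

lemma norm_le_sqrt {x : EuclideanSpace ℝ (Fin n)} {r : ℝ} (hr : 0 ≤ r)
    (h : ∀ i, |x i| ≤ r) : ‖x‖ ≤ Real.sqrt n * r := by
  rw [EuclideanSpace.norm_eq]
  calc Real.sqrt (∑ i, ‖x i‖ ^ 2) ≤ Real.sqrt (∑ _i : Fin n, r ^ 2) := by
        apply Real.sqrt_le_sqrt
        refine Finset.sum_le_sum fun i _ => ?_
        rw [Real.norm_eq_abs]
        nlinarith [abs_nonneg (x i), h i, sq_abs (x i)]
    _ = Real.sqrt n * r := by
        rw [Finset.sum_const, Finset.card_univ, Fintype.card_fin, nsmul_eq_mul,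
          Real.sqrt_mul (by positivity), Real.sqrt_sq hr]

-- image of a set under a linear equiv is measurable if the set is
lemma measurable_image (B : E' ≃ₗ[ℝ] E') {s : Set E'} (hs : MeasurableSet s) :
    MeasurableSet (B '' s) := by
  rw [show B '' s = B.symm ⁻¹' s from by
    ext y; simp [LinearEquiv.image_eq_preimage_symm]]
  exact ((B.symm : E' →ₗ[ℝ] E').continuous_of_finiteDimensional).measurable hs

lemma cover_bound (A B : E' ≃ₗ[ℝ] E') :
    ∃ c : ℝ, 0 < c ∧ ∀ (μ : Measure E') (R : ℝ), 0 < R → ∀ (N : ℝ), 0 ≤ N → ∀ z : E',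
      μ (A '' qcube z N) ≤
        (ENNReal.ofReal (|LinearMap.det (A : E' →ₗ[ℝ] E')| * (N + c * R) ^ n) /
          ENNReal.ofReal (|LinearMap.det (B : E' →ₗ[ℝ] E')| * R ^ n)) *
        ⨆ w : E', μ (B '' qcube w R) := by
  classical
  set M : E' →L[ℝ] E' :=
    LinearMap.toContinuousLinearMap ((A.symm : E' →ₗ[ℝ] E') ∘ₗ (B : E' →ₗ[ℝ] E')) with hMdef
  refine ⟨2 * (‖M‖ * Real.sqrt n) + 1, by positivity, ?_⟩
  set c : ℝ := 2 * (‖M‖ * Real.sqrt n) + 1 with hcdef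
  intro μ R hR N hN z
  have hc1 : (1:ℝ) ≤ c := by
    have : 0 ≤ ‖M‖ * Real.sqrt n := by positivity
    simp only [hcdef]; linarith
  have hc0 : 0 < c := lt_of_lt_of_le one_pos hc1
  -- coordinate bound for A.symm ∘ B on small cubes
  have hM : ∀ x : E', (∀ i, |x i| ≤ R) → ∀ i, |(A.symm (B x)) i| ≤ c * R / 2 := by
    intro x hx i
    have h1 : |(A.symm (B x)) i| ≤ ‖A.symm (B x)‖ := coord_le_norm _ i
    have h2 : ‖A.symm (B x)‖ = ‖M x‖ := by simp [hMdef]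
    have h3 : ‖M x‖ ≤ ‖M‖ * ‖x‖ := M.le_opNorm x
    have h4 : ‖x‖ ≤ Real.sqrt n * R := norm_le_sqrt hR.le hx
    have h5 : ‖M‖ * (Real.sqrt n * R) ≤ c * R / 2 := by
      rw [hcdef]; nlinarith [norm_nonneg M, hR]
    calc |(A.symm (B x)) i| ≤ ‖M‖ * ‖x‖ := by rw [← h2] at h3; linarith
      _ ≤ ‖M‖ * (Real.sqrt n * R) := by
          exact mul_le_mul_of_nonneg_left h4 (norm_nonneg M)
      _ ≤ c * R / 2 := h5
  -- half-open boxes and their centers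
  set H : (Fin n → ℤ) → Set E' :=
    fun k => {x | ∀ i, R * k i ≤ x i ∧ x i < R * k i + R} with hHdef
  set ck : (Fin n → ℤ) → E' :=
    fun k => (WithLp.equiv 2 (Fin n → ℝ)).symm (fun i => R * k i + R / 2) with hckdef
  have hck_apply : ∀ k i, (ck k) i = R * k i + R / 2 := by
    intro k i; simp [hckdef]
  have hHsub : ∀ k, H k ⊆ qcube (ck k) R := by
    intro k x hx i
    obtain ⟨h1, h2⟩ := hx i
    rw [hck_apply, abs_le]
    constructor <;> linarith
  -- the index set
  set S : Set (Fin n → ℤ) := {k | ((B '' H k) ∩ (A '' qcube z N)).Nonempty} with hSdef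
  -- floor uniqueness
  have hfloor : ∀ (x : ℝ) (m : ℤ), R * m ≤ x → x < R * m + R → m = ⌊x / R⌋ := by
    intro x m h1 h2
    symm
    rw [Int.floor_eq_iff]
    constructor
    · rw [le_div_iff₀ hR]; linarith
    · rw [div_lt_iff₀ hR]; push_cast; linarith
  -- covering
  have hcover : A '' qcube z N ⊆ ⋃ k ∈ S, B '' qcube (ck k) R := by
    intro y hy
    set u := B.symm y with hu
    set k : Fin n → ℤ := fun i => ⌊u i / R⌋ with hk
    have huH : u ∈ H k := by
      intro i
      constructor
      · have h1 : (⌊u i / R⌋ : ℝ) ≤ u i / R := Int.floor_le _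
        have := mul_le_mul_of_nonneg_left h1 hR.le
        rwa [mul_div_cancel₀ _ (ne_of_gt hR)] at this
      · have h2 : u i / R < ⌊u i / R⌋ + 1 := Int.lt_floor_add_one _
        have := mul_lt_mul_of_pos_left h2 hR
        rw [mul_div_cancel₀ _ (ne_of_gt hR)] at this
        calc u i < R * ((⌊u i / R⌋ : ℝ) + 1) := this
          _ = R * k i + R := by push_cast [hk]; ring
    have hyBu : y = B u := by rw [hu, LinearEquiv.apply_symm_apply]
    have hymem : y ∈ B '' H k := ⟨u, huH, hyBu.symm⟩
    refine mem_biUnion (show k ∈ S from ⟨y, hymem, hy⟩) ?_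
    exact ⟨u, hHsub k huH, hyBu.symm⟩
  -- disjointness of half-open tiles
  have hdisj : ((univ : Set (Fin n → ℤ))).PairwiseDisjoint (fun k => B '' H k) := by
    intro k _ k' _ hkk'
    apply Set.disjoint_left.mpr
    rintro y ⟨x, hx, hBx⟩ ⟨x', hx', hxx'⟩
    have hx'x : x' = x := B.injective (by rw [hBx, hxx'])
    rw [hx'x] at hx'
    apply hkk'
    funext i
    obtain ⟨a1, a2⟩ := hx i
    obtain ⟨b1, b2⟩ := hx' i
    rw [hfloor (x i) (k i) a1 a2, hfloor (x i) (k' i) b1 b2]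
  -- each tile meeting the target is inside the enlarged image
  have htile : ∀ k ∈ S, B '' H k ⊆ A '' qcube z (N + c * R) := by
    rintro k ⟨y₀, ⟨u₀, hu₀, hBu₀⟩, ⟨x₀, hx₀, hAx₀⟩⟩
    rintro y ⟨u, hu, rfl⟩
    set v := A.symm (B (u - u₀)) with hv
    refine ⟨x₀ + v, ?_, ?_⟩
    · intro i
      have hdiff : ∀ j, |(u - u₀) j| ≤ R := by
        intro j
        obtain ⟨a1, a2⟩ := hu j
        obtain ⟨b1, b2⟩ := hu₀ j
        have : (u - u₀) j = u j - u₀ j := by simp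
        rw [this, abs_le]; constructor <;> linarith
      have hvi : |v i| ≤ c * R / 2 := hM _ hdiff i
      have hxi : |x₀ i - z i| ≤ N / 2 := hx₀ i
      have : (x₀ + v) i = x₀ i + v i := by simp
      rw [this]
      have habs : |x₀ i + v i - z i| ≤ |x₀ i - z i| + |v i| := by
        calc |x₀ i + v i - z i| = |(x₀ i - z i) + v i| := by ring_nf
          _ ≤ _ := abs_add_le _ _
      calc |x₀ i + v i - z i| ≤ N / 2 + c * R / 2 := by linarith
        _ = (N + c * R) / 2 := by ring
    · calc A (x₀ + v) = A x₀ + A v := by rw [map_add]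
        _ = B u₀ + (B u - B u₀) := by
            rw [hAx₀, ← hBu₀, hv, LinearEquiv.apply_symm_apply, map_sub]
        _ = B u := by abel
  -- volumes and counting
  have hdetB0 : (0:ℝ) < |LinearMap.det (B : E' →ₗ[ℝ] E')| :=
    abs_pos.mpr B.isUnit_det'.ne_zero
  set G := ⨆ w : E', μ (B '' qcube w R) with hG
  set b : ℝ≥0∞ := ENNReal.ofReal (|LinearMap.det (B : E' →ₗ[ℝ] E')| * R ^ n) with hb
  set V : ℝ≥0∞ :=
    ENNReal.ofReal (|LinearMap.det (A : E' →ₗ[ℝ] E')| * (N + c * R) ^ n) with hV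
  have hb0 : b ≠ 0 := by
    rw [hb, ne_eq, ENNReal.ofReal_eq_zero, not_le]
    positivity
  have hbt : b ≠ ⊤ := ENNReal.ofReal_ne_top
  have hVt : V ≠ ⊤ := ENNReal.ofReal_ne_top
  have hHmeas : ∀ k, MeasurableSet (H k) := fun k => measurableSet_box (fun i => R * k i) R
  have hvolH : ∀ k, volume (B '' H k) = b := by
    intro k
    rw [show (⇑B '' H k) = ((B : E' →ₗ[ℝ] E') '' H k) from by simp,
      MeasureTheory.Measure.addHaar_image_linearMap, hHdef,
      volume_box (fun i => R * k i) hR.le, hb,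
      ENNReal.ofReal_mul (abs_nonneg _)]
  have hNR : (0:ℝ) ≤ N + c * R := by positivity
  have hvolA : volume (A '' qcube z (N + c * R)) = V := by
    rw [show (⇑A '' qcube z (N + c * R)) = ((A : E' →ₗ[ℝ] E') '' qcube z (N + c * R)) from
        by simp,
      MeasureTheory.Measure.addHaar_image_linearMap, volume_qcube z hNR, hV,
      ENNReal.ofReal_mul (abs_nonneg _)]
  have hcard : ∀ F : Finset (Fin n → ℤ), ↑F ⊆ S → (F.card : ℝ≥0∞) * b ≤ V := by
    intro F hF
    calc (F.card : ℝ≥0∞) * b = ∑ _k ∈ F, b := by rw [Finset.sum_const, nsmul_eq_mul]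
      _ = ∑ k ∈ F, volume (B '' H k) := (Finset.sum_congr rfl fun k _ => (hvolH k).symm)
      _ = volume (⋃ k ∈ F, B '' H k) :=
          (measure_biUnion_finset (hdisj.subset (subset_univ _))
            (fun k _ => measurable_image B (hHmeas k))).symm
      _ ≤ volume (A '' qcube z (N + c * R)) :=
          measure_mono (Set.iUnion₂_subset fun k hk => htile k (hF hk))
      _ = V := hvolA
  have hfin : S.Finite := by
    by_contra hinf
    have hinf' : S.Infinite := hinf
    obtain ⟨m, hm⟩ := ENNReal.exists_nat_gt (ENNReal.div_lt_top hVt hb0).ne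
    obtain ⟨F, hFS, hFc⟩ := hinf'.exists_subset_card_eq m
    have h1 := hcard F hFS
    rw [hFc] at h1
    have h2 : V < m * b := by
      rwa [ENNReal.div_lt_iff (Or.inl hb0) (Or.inl hbt)] at hm
    exact absurd h1 (not_le.mpr h2)
  have hcoe : (⋃ k ∈ hfin.toFinset, B '' qcube (ck k) R) = ⋃ k ∈ S, B '' qcube (ck k) R := by
    ext y; simp [Set.Finite.mem_toFinset]
  calc μ (A '' qcube z N) ≤ μ (⋃ k ∈ hfin.toFinset, B '' qcube (ck k) R) :=
        measure_mono (by rw [hcoe]; exact hcover)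
    _ ≤ ∑ k ∈ hfin.toFinset, μ (B '' qcube (ck k) R) := measure_biUnion_finset_le _ _
    _ ≤ ∑ _k ∈ hfin.toFinset, G :=
        Finset.sum_le_sum fun k _ => le_iSup (fun w => μ (B '' qcube w R)) (ck k)
    _ = (hfin.toFinset.card : ℝ≥0∞) * G := by rw [Finset.sum_const, nsmul_eq_mul]
    _ ≤ (V / b) * G := by
        refine mul_le_mul_left ?_ G
        rw [ENNReal.le_div_iff_mul_le (Or.inl hb0) (Or.inl hbt)]
        exact hcard hfin.toFinset (by rw [Set.Finite.coe_toFinset])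

lemma core (μ : Measure E') (A B : E' ≃ₗ[ℝ] E') {R : ℝ} (hR : 0 < R) :
    ENNReal.ofReal |LinearMap.det (B : E' →ₗ[ℝ] E')| *
      Filter.limsup
        (fun N : ℝ => (⨆ z : E', μ (A '' qcube z N)) / ENNReal.ofReal (N ^ n)) atTop ≤
    ENNReal.ofReal |LinearMap.det (A : E' →ₗ[ℝ] E')| *
      ((⨆ w : E', μ (B '' qcube w R)) / ENNReal.ofReal (R ^ n)) := by
  set a : ℝ := |LinearMap.det (A : E' →ₗ[ℝ] E')| with hadef
  set bB : ℝ := |LinearMap.det (B : E' →ₗ[ℝ] E')| with hbdef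
  have ha : 0 < a := abs_pos.mpr A.isUnit_det'.ne_zero
  have hbB : 0 < bB := abs_pos.mpr B.isUnit_det'.ne_zero
  set G := ⨆ w : E', μ (B '' qcube w R) with hG
  by_cases hGtop : G = ⊤
  · rw [hGtop, ENNReal.top_div_of_ne_top ENNReal.ofReal_ne_top,
      ENNReal.mul_top (by rw [ne_eq, ENNReal.ofReal_eq_zero, not_le]; positivity)]
    exact le_top
  obtain ⟨c, hc, hbound⟩ := cover_bound A B
  set d : ℝ≥0∞ := ENNReal.ofReal (bB * R ^ n) with hd
  have hd0 : d ≠ 0 := by rw [hd, ne_eq, ENNReal.ofReal_eq_zero, not_le]; positivity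
  have hdt : d ≠ ⊤ := ENNReal.ofReal_ne_top
  -- eventual bound
  have hF : ∀ᶠ N in (atTop : Filter ℝ),
      (⨆ z : E', μ (A '' qcube z N)) / ENNReal.ofReal (N ^ n) ≤
        ENNReal.ofReal (a * (N + c * R) ^ n / N ^ n) * (G / d) := by
    filter_upwards [eventually_gt_atTop (0:ℝ)] with N hN
    have h1 : (⨆ z : E', μ (A '' qcube z N)) ≤
        (ENNReal.ofReal (a * (N + c * R) ^ n) / d) * G :=
      iSup_le fun z => hbound μ R hR N hN.le z
    have h2 : (⨆ z : E', μ (A '' qcube z N)) / ENNReal.ofReal (N ^ n) ≤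
        ((ENNReal.ofReal (a * (N + c * R) ^ n) / d) * G) / ENNReal.ofReal (N ^ n) :=
      ENNReal.div_le_div_right h1 _
    refine h2.trans_eq ?_
    rw [ENNReal.ofReal_div_of_pos (by positivity : (0:ℝ) < N ^ n)]
    simp only [div_eq_mul_inv]
    ring
  -- tendsto of the bound
  have hreal : Tendsto (fun N : ℝ => a * (N + c * R) ^ n / N ^ n) atTop (nhds a) := by
    have h0 : Tendsto (fun N : ℝ => (1 + c * R / N) ^ n) atTop (nhds 1) := by
      have h1 : Tendsto (fun N : ℝ => 1 + c * R / N) atTop (nhds 1) := by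
        have := tendsto_inv_atTop_zero (𝕜 := ℝ)
        have h2 := this.const_mul (c * R)
        simp only [mul_zero] at h2
        have h3 := tendsto_const_nhds (x := (1:ℝ)) (f := atTop).add h2
        simpa [div_eq_mul_inv] using h3
      simpa using h1.pow n
    have heq : ∀ᶠ N in (atTop : Filter ℝ),
        a * (1 + c * R / N) ^ n = a * (N + c * R) ^ n / N ^ n := by
      filter_upwards [eventually_gt_atTop (0:ℝ)] with N hN
      rw [show 1 + c * R / N = (N + c * R) / N from by field_simp, div_pow]
      ring
    have := (h0.const_mul a)
    simp only [mul_one] at this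
    exact Tendsto.congr' heq this
  have htend : Tendsto (fun N : ℝ => ENNReal.ofReal (a * (N + c * R) ^ n / N ^ n) * (G / d))
      atTop (nhds (ENNReal.ofReal a * (G / d))) := by
    refine ENNReal.Tendsto.mul_const ?_ (Or.inr ?_)
    · exact (ENNReal.continuous_ofReal.tendsto a).comp hreal
    · exact (ENNReal.div_lt_top hGtop hd0).ne
  have hlim : Filter.limsup
      (fun N : ℝ => (⨆ z : E', μ (A '' qcube z N)) / ENNReal.ofReal (N ^ n)) atTop ≤
      ENNReal.ofReal a * (G / d) := by
    calc _ ≤ Filter.limsup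
          (fun N : ℝ => ENNReal.ofReal (a * (N + c * R) ^ n / N ^ n) * (G / d)) atTop :=
        Filter.limsup_le_limsup hF
      _ = ENNReal.ofReal a * (G / d) := htend.limsup_eq
  calc ENNReal.ofReal bB * Filter.limsup
        (fun N : ℝ => (⨆ z : E', μ (A '' qcube z N)) / ENNReal.ofReal (N ^ n)) atTop ≤
      ENNReal.ofReal bB * (ENNReal.ofReal a * (G / d)) := mul_le_mul_right hlim _
    _ = ENNReal.ofReal a * (G / ENNReal.ofReal (R ^ n)) := by
        set β := ENNReal.ofReal bB with hβ
        set ρ := ENNReal.ofReal (R ^ n) with hρ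
        have hβ0 : β ≠ 0 := by rw [hβ, ne_eq, ENNReal.ofReal_eq_zero, not_le]; positivity
        have hβt : β ≠ ⊤ := ENNReal.ofReal_ne_top
        have hρt : ρ ≠ ⊤ := ENNReal.ofReal_ne_top
        have hdsplit : d = β * ρ := by
          rw [hd, hβ, hρ, ENNReal.ofReal_mul (le_of_lt hbB)]
        rw [hdsplit, div_eq_mul_inv, div_eq_mul_inv,
          ENNReal.mul_inv (Or.inl hβ0) (Or.inl hβt)]
        calc β * (ENNReal.ofReal a * (G * (β⁻¹ * ρ⁻¹)))
            = (β * β⁻¹) * (ENNReal.ofReal a * (G * ρ⁻¹)) := by ring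
          _ = ENNReal.ofReal a * (G * ρ⁻¹) := by
              rw [ENNReal.mul_inv_cancel hβ0 hβt, one_mul]

lemma mainEq (μ : Measure E') (A B : E' ≃ₗ[ℝ] E') :
    ENNReal.ofReal |LinearMap.det (B : E' →ₗ[ℝ] E')| *
      Filter.limsup
        (fun N : ℝ => (⨆ z : E', μ (A '' qcube z N)) / ENNReal.ofReal (N ^ n)) atTop =
    ENNReal.ofReal |LinearMap.det (A : E' →ₗ[ℝ] E')| *
      Filter.limsup
        (fun N : ℝ => (⨆ z : E', μ (B '' qcube z N)) / ENNReal.ofReal (N ^ n)) atTop := by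
  have key : ∀ (A B : E' ≃ₗ[ℝ] E'),
      ENNReal.ofReal |LinearMap.det (B : E' →ₗ[ℝ] E')| *
        Filter.limsup
          (fun N : ℝ => (⨆ z : E', μ (A '' qcube z N)) / ENNReal.ofReal (N ^ n)) atTop ≤
      ENNReal.ofReal |LinearMap.det (A : E' →ₗ[ℝ] E')| *
        Filter.limsup
          (fun N : ℝ => (⨆ z : E', μ (B '' qcube z N)) / ENNReal.ofReal (N ^ n)) atTop := by
    intro A B
    have h : ∀ᶠ R in (atTop : Filter ℝ),
        ENNReal.ofReal |LinearMap.det (B : E' →ₗ[ℝ] E')| *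
          Filter.limsup
            (fun N : ℝ => (⨆ z : E', μ (A '' qcube z N)) / ENNReal.ofReal (N ^ n)) atTop ≤
        ENNReal.ofReal |LinearMap.det (A : E' →ₗ[ℝ] E')| *
          ((⨆ w : E', μ (B '' qcube w R)) / ENNReal.ofReal (R ^ n)) := by
      filter_upwards [eventually_gt_atTop (0:ℝ)] with R hR
      exact core μ A B hR
    calc _ ≤ Filter.liminf (fun R : ℝ =>
          ENNReal.ofReal |LinearMap.det (A : E' →ₗ[ℝ] E')| *
            ((⨆ w : E', μ (B '' qcube w R)) / ENNReal.ofReal (R ^ n))) atTop :=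
        le_liminf_of_le (by isBoundedDefault) h
      _ ≤ Filter.limsup (fun R : ℝ =>
          ENNReal.ofReal |LinearMap.det (A : E' →ₗ[ℝ] E')| *
            ((⨆ w : E', μ (B '' qcube w R)) / ENNReal.ofReal (R ^ n))) atTop :=
        liminf_le_limsup
      _ = _ := ENNReal.limsup_const_mul_of_ne_top ENNReal.ofReal_ne_top
  exact le_antisymm (key A B) (key B A)

lemma countingMeasure_map {Λ : Set E'} (f : E' → E') (hf : Measurable f)
    (hinj : Function.Injective f) :
    countingMeasure (f '' Λ) = Measure.map f (countingMeasure Λ) := by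
  unfold countingMeasure
  ext s hs
  rw [Measure.map_apply hf hs, Measure.sum_apply _ hs, Measure.sum_apply _ (hf hs)]
  rw [← Equiv.tsum_eq (Equiv.Set.image f Λ hinj)
    (fun y : (f '' Λ) => Measure.dirac (y : E') s)]
  congr 1
  funext x
  rw [Measure.dirac_apply' _ hs, Measure.dirac_apply' _ (hf hs)]
  have he : ((Equiv.Set.image f Λ hinj) x : E') = f x := by simp
  rw [he]
  rfl

end BeurlingDensityAux

open BeurlingDensityAux in
/-- **Proposition.** For a countable discrete set `Λ ⊆ ℝⁿ` and an invertible real `n×n` matrix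
`C`, one has `|det C| · D⁺(CΛ) = D⁺(Λ)`. -/
theorem det_mul_upperBeurling_image {n : ℕ} (Λ : Set (EuclideanSpace ℝ (Fin n)))
    (hΛc : Λ.Countable) (hΛd : DiscreteTopology Λ)
    (C : Matrix (Fin n) (Fin n) ℝ) (hC : C.det ≠ 0) :
    ENNReal.ofReal |C.det| *
        beurlingUpper (countingMeasure (Matrix.toEuclideanLin C '' Λ)) =
      beurlingUpper (countingMeasure Λ) := by
  classical
  set T : EuclideanSpace ℝ (Fin n) →ₗ[ℝ] EuclideanSpace ℝ (Fin n) :=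
    Matrix.toEuclideanLin C with hT
  have hdet : LinearMap.det T = C.det := by
    rw [hT, Matrix.toEuclideanLin_eq_toLin, LinearMap.det_toLin]
  have hdet0 : LinearMap.det T ≠ 0 := by rw [hdet]; exact hC
  set Teq : EuclideanSpace ℝ (Fin n) ≃ₗ[ℝ] EuclideanSpace ℝ (Fin n) :=
    LinearMap.equivOfDetNeZero T hdet0 with hTeq
  have hcoe : (Teq : EuclideanSpace ℝ (Fin n) →ₗ[ℝ] EuclideanSpace ℝ (Fin n)) = T :=
    LinearEquiv.coe_ofIsUnitDet _
  have hfun : (⇑Teq : EuclideanSpace ℝ (Fin n) → EuclideanSpace ℝ (Fin n)) = ⇑T := by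
    rw [← hcoe]; rfl
  have hmeas : Measurable (⇑T) := T.continuous_of_finiteDimensional.measurable
  set μ : Measure (EuclideanSpace ℝ (Fin n)) := countingMeasure Λ with hμ
  -- counting measure of image is the pushforward
  have hνmap : countingMeasure (Matrix.toEuclideanLin C '' Λ) = Measure.map (⇑T) μ := by
    rw [hμ, ← countingMeasure_map (⇑T) hmeas (by rw [← hfun]; exact Teq.injective)]
  -- rewrite beurlingUpper of the image measure
  have hBν : beurlingUpper (countingMeasure (Matrix.toEuclideanLin C '' Λ)) =
      Filter.limsup (fun N : ℝ =>
        (⨆ z : EuclideanSpace ℝ (Fin n), μ (Teq.symm '' qcube z N)) /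
          ENNReal.ofReal (N ^ n)) atTop := by
    rw [hνmap]
    unfold beurlingUpper
    congr 1
    funext N
    rw [← ENNReal.iSup_div]
    congr 1
    refine iSup_congr fun z => ?_
    rw [show {y : EuclideanSpace ℝ (Fin n) | ∀ i, |y i - z i| ≤ N / 2} = qcube z N from rfl,
      Measure.map_apply hmeas (measurableSet_qcube z N)]
    congr 1
    rw [LinearEquiv.image_eq_preimage_symm, LinearEquiv.symm_symm, hfun]
  have hBμ : beurlingUpper μ =
      Filter.limsup (fun N : ℝ =>
        (⨆ z : EuclideanSpace ℝ (Fin n),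
          μ ((LinearEquiv.refl ℝ (EuclideanSpace ℝ (Fin n))) '' qcube z N)) /
          ENNReal.ofReal (N ^ n)) atTop := by
    unfold beurlingUpper
    congr 1
    funext N
    rw [← ENNReal.iSup_div]
    congr 1
    refine iSup_congr fun z => ?_
    congr 1
    show _ = ⇑(LinearEquiv.refl ℝ (EuclideanSpace ℝ (Fin n))) '' _
    rw [show ⇑(LinearEquiv.refl ℝ (EuclideanSpace ℝ (Fin n))) = id from rfl, Set.image_id]
    rfl
  rw [hBν, hBμ]
  have hmain := mainEq μ Teq.symm (LinearEquiv.refl ℝ (EuclideanSpace ℝ (Fin n)))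
  have hrefl : LinearMap.det
      ((LinearEquiv.refl ℝ (EuclideanSpace ℝ (Fin n))) :
        EuclideanSpace ℝ (Fin n) →ₗ[ℝ] EuclideanSpace ℝ (Fin n)) = 1 := by
    rw [LinearEquiv.refl_toLinearMap, LinearMap.det_id]
  rw [hrefl] at hmain
  norm_num at hmain
  -- hmain : limsup F_{Teq.symm} = ofReal |det Teq.symm| * limsup F_refl
  have hdsymm : LinearMap.det
      ((Teq.symm : EuclideanSpace ℝ (Fin n) →ₗ[ℝ] EuclideanSpace ℝ (Fin n))) * C.det = 1 := by
    have hcomp : ((Teq.symm : EuclideanSpace ℝ (Fin n) →ₗ[ℝ] EuclideanSpace ℝ (Fin n)).comp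
        (Teq : EuclideanSpace ℝ (Fin n) →ₗ[ℝ] EuclideanSpace ℝ (Fin n))) = LinearMap.id := by
      ext x; simp
    have := congrArg LinearMap.det hcomp
    rw [LinearMap.det_comp, LinearMap.det_id, hcoe, hdet] at this
    exact this
  rw [hmain, ← mul_assoc, ← ENNReal.ofReal_mul (abs_nonneg _), ← abs_mul,
    mul_comm C.det _, hdsymm]
  norm_num
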